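/- Let k ≥ 2 and let m = (m_A : A ⊆ {1,…,k}, |A| = 2) be a tuple of positive integers satisfying the consistency condition: gcd(m_{A₁}, m_{B₁}) = gcd(m_{A₂}, m_{B₂}) for all two-element subsets A₁, B₁, A₂, B₂ of {1,…,k} with A₁ ∪ B₁ = A₂ ∪ B₂. For each i ∈ {1,…,k} set M_i := lcm{m_A : A ⊆ {1,…,k}, |A| = 2, i ∈ A}. Then for all 1 ≤ i < j ≤ k, gcd(M_i, M_j) = m_{{i,j}}. -/

import Mathlib

open Finset

lemma gcd_lcm_dvd_of (x u v d : ℕ) (hu : Nat.gcd x u ∣ d) (hv : Nat.gcd x v ∣ d) :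
    Nat.gcd x (Nat.lcm u v) ∣ d := by
  rcases eq_or_ne d 0 with rfl | hd
  · exact dvd_zero _
  rcases eq_or_ne x 0 with rfl | hx
  · simpa using Nat.lcm_dvd (by simpa using hu) (by simpa using hv)
  rcases eq_or_ne u 0 with rfl | hu0
  · simpa using hu
  rcases eq_or_ne v 0 with rfl | hv0
  · simpa using hv
  have hl : Nat.lcm u v ≠ 0 := Nat.lcm_ne_zero hu0 hv0
  rw [← Nat.factorization_le_iff_dvd (Nat.gcd_ne_zero_left hx) hd]
  intro p
  have h1 := (Nat.factorization_le_iff_dvd (Nat.gcd_ne_zero_left hx) hd).2 hu p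
  have h2 := (Nat.factorization_le_iff_dvd (Nat.gcd_ne_zero_left hx) hd).2 hv p
  rw [Nat.factorization_gcd hx hu0, Finsupp.inf_apply] at h1
  rw [Nat.factorization_gcd hx hv0, Finsupp.inf_apply] at h2
  rw [Nat.factorization_gcd hx hl, Finsupp.inf_apply, Nat.factorization_lcm hu0 hv0,
    Finsupp.sup_apply, inf_sup_left]
  exact sup_le h1 h2

lemma gcd_finset_lcm_dvd {α : Type*} [DecidableEq α] (S : Finset α) (m : α → ℕ) (x d : ℕ)
    (h : ∀ A ∈ S, Nat.gcd x (m A) ∣ d) : Nat.gcd x (S.lcm m) ∣ d := by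
  induction S using Finset.induction with
  | empty => simpa using one_dvd d
  | insert _ _ hA ih =>
    rw [Finset.lcm_insert]
    exact gcd_lcm_dvd_of _ _ _ _ (h _ (Finset.mem_insert_self _ _))
      (ih fun A hA' => h _ (Finset.mem_insert_of_mem hA'))

theorem gcd_of_lcms (k : ℕ) (hk : 2 ≤ k) (m : Finset (Fin k) → ℕ)
    (hpos : ∀ A : Finset (Fin k), A.card = 2 → 0 < m A)
    (hcons : ∀ A₁ B₁ A₂ B₂ : Finset (Fin k),
      A₁.card = 2 → B₁.card = 2 → A₂.card = 2 → B₂.card = 2 →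
      A₁ ∪ B₁ = A₂ ∪ B₂ → Nat.gcd (m A₁) (m B₁) = Nat.gcd (m A₂) (m B₂)) :
    ∀ i j : Fin k, i < j →
      Nat.gcd
        ((Finset.univ.filter (fun A : Finset (Fin k) => A.card = 2 ∧ i ∈ A)).lcm m)
        ((Finset.univ.filter (fun A : Finset (Fin k) => A.card = 2 ∧ j ∈ A)).lcm m) =
      m {i, j} := by
  intro i j hij
  have hne : i ≠ j := ne_of_lt hij
  have hcardij : ({i, j} : Finset (Fin k)).card = 2 := Finset.card_pair hne
  -- key lemma: pairwise gcds divide m {i,j}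
  have key : ∀ A B : Finset (Fin k), A.card = 2 → B.card = 2 → i ∈ A → j ∈ B →
      Nat.gcd (m A) (m B) ∣ m {i, j} := by
    intro A B hA hB hiA hjB
    by_cases hjA : j ∈ A
    · have hAij : A = {i, j} := by
        refine (Finset.eq_of_subset_of_card_le ?_ (by rw [hA, hcardij])).symm
        intro x hx; simp at hx ⊢; rcases hx with rfl | rfl <;> tauto
      rw [← hAij]; exact Nat.gcd_dvd_left _ _
    by_cases hiB : i ∈ B
    · have hBij : B = {i, j} := by
        refine (Finset.eq_of_subset_of_card_le ?_ (by rw [hB, hcardij])).symm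
        intro x hx; simp at hx ⊢; rcases hx with rfl | rfl <;> tauto
      rw [← hBij]; exact Nat.gcd_dvd_right _ _
    -- extract the other elements
    obtain ⟨x, y, hxy, hAe⟩ := Finset.card_eq_two.1 hA
    obtain ⟨u, v, huv, hBe⟩ := Finset.card_eq_two.1 hB
    -- normalize: A = {i, a}, B = {j, b}
    have hA' : ∃ a, a ≠ i ∧ a ≠ j ∧ A = {i, a} := by
      subst hAe
      simp only [Finset.mem_insert, Finset.mem_singleton] at hiA hjA
      rcases hiA with rfl | rfl
      · exact ⟨y, fun h => hxy h.symm, fun h => hjA (by simp [h]), rfl⟩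
      · exact ⟨x, hxy, fun h => hjA (by simp [h]), by rw [Finset.pair_comm]⟩
    have hB' : ∃ b, b ≠ j ∧ b ≠ i ∧ B = {j, b} := by
      subst hBe
      simp only [Finset.mem_insert, Finset.mem_singleton] at hjB hiB
      rcases hjB with rfl | rfl
      · exact ⟨v, fun h => huv h.symm, fun h => hiB (by simp [h]), rfl⟩
      · exact ⟨u, huv, fun h => hiB (by simp [h]), by rw [Finset.pair_comm]⟩
    obtain ⟨a, hai, haj, rfl⟩ := hA'
    obtain ⟨b, hbj, hbi, rfl⟩ := hB'
    by_cases hab : a = b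
    · subst hab
      have := hcons {i, a} {j, a} {i, j} {j, a} (Finset.card_pair (Ne.symm hai))
        (Finset.card_pair (Ne.symm haj)) hcardij (Finset.card_pair (Ne.symm haj))
        (by ext x; simp; tauto)
      rw [this]; exact Nat.gcd_dvd_left _ _
    · have := hcons {i, a} {j, b} {i, j} {a, b} (Finset.card_pair (Ne.symm hai))
        (Finset.card_pair (Ne.symm hbj)) hcardij (Finset.card_pair hab)
        (by ext x; simp; tauto)
      rw [this]; exact Nat.gcd_dvd_left _ _
  apply Nat.dvd_antisymm
  · apply gcd_finset_lcm_dvd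
    intro B hBmem
    rw [Finset.mem_filter] at hBmem
    rw [Nat.gcd_comm]
    apply gcd_finset_lcm_dvd
    intro A hAmem
    rw [Finset.mem_filter] at hAmem
    rw [Nat.gcd_comm]
    exact key A B hAmem.2.1 hBmem.2.1 hAmem.2.2 hBmem.2.2
  · apply Nat.dvd_gcd <;>
    · apply Finset.dvd_lcm
      simp [hcardij, hne]
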